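/- Every finite chordal graph is either complete or has at least two non-adjacent simplicial vertices (Dirac's lemma). -/

import Mathlib

variable {V : Type*}

/-- A vertex is simplicial if its neighborhood induces a complete subgraph. -/
def IsSimplicialVertex (G : SimpleGraph V) (v : V) : Prop :=
  ∀ a b, G.Adj v a → G.Adj v b → a ≠ b → G.Adj a b

/-- `G` is chordal: every cycle of length at least four has a chord, i.e. an edge of `G`
joining two vertices of the cycle which is not an edge of the cycle. -/
def IsChordalGraph (G : SimpleGraph V) : Prop :=
  ∀ (u : V) (c : G.Walk u u), c.IsCycle → 4 ≤ c.length →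
    ∃ a b, a ∈ c.support ∧ b ∈ c.support ∧ G.Adj a b ∧ s(a, b) ∉ c.edges

open SimpleGraph Walk

open SimpleGraph Walk

/-- The subgraph of `G` using only edges inside `T` (on the same vertex type). -/
def GOn (G : SimpleGraph V) (T : Set V) : SimpleGraph V where
  Adj u v := G.Adj u v ∧ u ∈ T ∧ v ∈ T
  symm := ⟨fun u v (h : G.Adj u v ∧ u ∈ T ∧ v ∈ T) => ⟨h.1.symm, h.2.2, h.2.1⟩⟩
  loopless := ⟨fun u (h : G.Adj u u ∧ u ∈ T ∧ u ∈ T) => G.irrefl h.1⟩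

lemma gOn_le (G : SimpleGraph V) (T : Set V) : GOn G T ≤ G := fun _ _ h => h.1

lemma gOn_mono (G : SimpleGraph V) {T T' : Set V} (h : T ⊆ T') : GOn G T ≤ GOn G T' :=
  fun _ _ ha => ⟨ha.1, h ha.2.1, h ha.2.2⟩

lemma gOn_support_mem {G : SimpleGraph V} {T : Set V} {u v : V}
    (w : (GOn G T).Walk u v) (hu : u ∈ T) : ∀ z ∈ w.support, z ∈ T := by
  induction w with
  | nil => intro z hz; simp only [Walk.support_nil, List.mem_singleton] at hz; subst hz; exact hu
  | cons h p ih =>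
    intro z hz
    rw [Walk.support_cons, List.mem_cons] at hz
    rcases hz with rfl | hz
    · exact hu
    · exact ih h.2.2 z hz

lemma gOn_reach_mem {G : SimpleGraph V} {T : Set V} {u v : V}
    (hu : u ∈ T) (h : (GOn G T).Reachable u v) : v ∈ T := by
  obtain ⟨w⟩ := h
  exact gOn_support_mem w hu v w.end_mem_support

lemma gOn_reach_of_support {G : SimpleGraph V} {T T' : Set V} {u v : V}
    (w : (GOn G T).Walk u v) (h : ∀ z ∈ w.support, z ∈ T') :
    (GOn G T').Reachable u v := by
  induction w with
  | nil => exact Reachable.refl _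
  | @cons a c b hadj p ih =>
    have h1 : (GOn G T').Adj a c :=
      ⟨hadj.1, h a (by simp), h c (by simp [Walk.support_cons, p.start_mem_support])⟩
    exact h1.reachable.trans (ih fun z hz => h z (by simp [Walk.support_cons, hz]))

lemma reachable_of_mem_support [DecidableEq V] {H : SimpleGraph V} {u v z : V}
    (w : H.Walk u v) (hz : z ∈ w.support) : H.Reachable u z :=
  ⟨w.takeUntil z hz⟩

lemma edges_of_length_one {H : SimpleGraph V} {u v : V}
    (w : H.Walk u v) (h : w.length = 1) : w.edges = [s(u, v)] := by
  cases w with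
  | nil => simp at h
  | cons ha p =>
    cases p with
    | nil => simp
    | cons hb q => simp [Walk.length_cons] at h

lemma exists_min_walk {H : SimpleGraph V} {u v : V} (h : H.Reachable u v) :
    ∃ P : H.Walk u v, P.IsPath ∧ ∀ Q : H.Walk u v, P.length ≤ Q.length := by
  classical
  obtain ⟨w⟩ := h
  have hex : ∃ n, ∃ Q : H.Walk u v, Q.length = n := ⟨w.length, w, rfl⟩
  obtain ⟨Q, hQ⟩ := Nat.find_spec hex
  refine ⟨Q.bypass, Q.bypass_isPath, fun R => ?_⟩
  have h1 : Nat.find hex ≤ R.length := Nat.find_le ⟨R, rfl⟩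
  have h2 : Q.bypass.length ≤ Q.length := Walk.length_bypass_le _
  omega
/-- In a walk of minimal length, adjacent support vertices are joined by a walk edge. -/
lemma mem_edges_of_adj_of_min [DecidableEq V] {H : SimpleGraph V} {x y : V} (P : H.Walk x y)
    (hmin : ∀ Q : H.Walk x y, P.length ≤ Q.length) {u w : V}
    (hu : u ∈ P.support) (hw : w ∈ P.support) (h : H.Adj u w) : s(u, w) ∈ P.edges := by
  have hspec := P.take_spec hu
  have hmem : w ∈ (P.takeUntil u hu).support ∨ w ∈ (P.dropUntil u hu).support := by
    rw [← Walk.mem_support_append_iff, hspec]; exact hw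
  have hlen : (P.takeUntil u hu).length + (P.dropUntil u hu).length = P.length := by
    rw [← Walk.length_append, hspec]
  cases hmem with
  | inr hwd =>
    set d := P.dropUntil u hu with hd
    have hspec2 := d.take_spec hwd
    have hl2 : (d.takeUntil w hwd).length + (d.dropUntil w hwd).length = d.length := by
      rw [← Walk.length_append, hspec2]
    have hQ := hmin ((P.takeUntil u hu).append (Walk.cons h (d.dropUntil w hwd)))
    rw [Walk.length_append, Walk.length_cons] at hQ
    have hne : (d.takeUntil w hwd).length ≠ 0 := by
      intro h0
      exact h.ne (Walk.eq_of_length_eq_zero h0)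
    have h1 : (d.takeUntil w hwd).length = 1 := by omega
    have : s(u, w) ∈ (d.takeUntil w hwd).edges := by
      rw [edges_of_length_one _ h1]; simp
    exact (P.edges_dropUntil_subset hu) ((d.edges_takeUntil_subset hwd) this)
  | inl hwt =>
    set t := P.takeUntil u hu with ht
    have hspec2 := t.take_spec hwt
    have hl2 : (t.takeUntil w hwt).length + (t.dropUntil w hwt).length = t.length := by
      rw [← Walk.length_append, hspec2]
    have hQ := hmin ((t.takeUntil w hwt).append (Walk.cons h.symm (P.dropUntil u hu)))
    rw [Walk.length_append, Walk.length_cons] at hQ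
    have hne : (t.dropUntil w hwt).length ≠ 0 := by
      intro h0
      exact h.ne (Walk.eq_of_length_eq_zero h0).symm
    have h1 : (t.dropUntil w hwt).length = 1 := by omega
    have : s(u, w) ∈ (t.dropUntil w hwt).edges := by
      rw [edges_of_length_one _ h1, Sym2.eq_swap]; simp
    exact (P.edges_takeUntil_subset hu) ((t.edges_dropUntil_subset hwt) this)

/-- Walks avoiding `S \ {s}` either avoid `S`, or reach a neighbour of `s` avoiding `S`. -/
lemma walk_avoid {G : SimpleGraph V} {S : Set V} {s : V} {a b : V}
    (w : (GOn G (S \ {s})ᶜ).Walk a b) :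
    a ∉ S → ((GOn G Sᶜ).Reachable a b ∨ ∃ y, G.Adj y s ∧ (GOn G Sᶜ).Reachable a y) := by
  induction w with
  | nil => intro _; exact Or.inl (Reachable.refl _)
  | @cons a c b h p ih =>
    intro ha
    by_cases hc : c = s
    · subst hc; exact Or.inr ⟨a, h.1, Reachable.refl _⟩
    · have hcS : c ∉ S := by
        have h2 : c ∈ (S \ {s})ᶜ := h.2.2
        intro hcmem; exact h2 ⟨hcmem, hc⟩
      have hedge : (GOn G Sᶜ).Adj a c := ⟨h.1, ha, hcS⟩
      rcases ih hcS with h1 | ⟨y, hy1, hy2⟩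
      · exact Or.inl (hedge.reachable.trans h1)
      · exact Or.inr ⟨y, hy1, hedge.reachable.trans hy2⟩

lemma chordal_induce {G : SimpleGraph V} (hG : IsChordalGraph G) (T : Set V) :
    IsChordalGraph (G.induce T) := by
  intro u c hc hlen
  let f : G.induce T →g G := ⟨Subtype.val, fun {x y} h => h⟩
  have hinj : Function.Injective f := Subtype.val_injective
  have hc' : (c.map f).IsCycle := hc.map hinj
  obtain ⟨p, q, hp, hq, hpq, hne⟩ := hG _ (c.map f) hc' (by rw [Walk.length_map]; exact hlen)
  rw [Walk.support_map] at hp hq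
  obtain ⟨p', hp', rfl⟩ := List.mem_map.mp hp
  obtain ⟨q', hq', rfl⟩ := List.mem_map.mp hq
  refine ⟨p', q', hp', hq', hpq, fun hmem => hne ?_⟩
  rw [Walk.edges_map]
  exact List.mem_map.mpr ⟨_, hmem, by simp [f]⟩
lemma extract_simplicial {G : SimpleGraph V} {S C : Set V} {a : V}
    (haC : a ∈ C)
    (hclose : ∀ v ∈ C, ∀ z, G.Adj v z → z ∈ C ∪ S)
    (hclique : ∀ p ∈ S, ∀ q ∈ S, p ≠ q → G.Adj p q)
    (hres : (∀ u v : ↥(C ∪ S), u ≠ v → (G.induce (C ∪ S)).Adj u v) ∨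
      ∃ u v : ↥(C ∪ S), u ≠ v ∧ ¬(G.induce (C ∪ S)).Adj u v ∧
        IsSimplicialVertex (G.induce (C ∪ S)) u ∧ IsSimplicialVertex (G.induce (C ∪ S)) v) :
    ∃ v ∈ C, IsSimplicialVertex G v := by
  cases hres with
  | inl hcomp =>
    refine ⟨a, haC, fun p q hp hq hpq => ?_⟩
    have hpm : p ∈ C ∪ S := hclose a haC p hp
    have hqm : q ∈ C ∪ S := hclose a haC q hq
    exact hcomp ⟨p, hpm⟩ ⟨q, hqm⟩ (by simpa [Subtype.ext_iff] using hpq)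
  | inr h =>
    obtain ⟨u, v, huv, hnadj, hu, hv⟩ := h
    have key : ∀ w : ↥(C ∪ S), (w : V) ∈ C → IsSimplicialVertex (G.induce (C ∪ S)) w →
        IsSimplicialVertex G w := by
      intro w hwC hw p q hp hq hpq
      have hpm : p ∈ C ∪ S := hclose w hwC p hp
      have hqm : q ∈ C ∪ S := hclose w hwC q hq
      exact hw ⟨p, hpm⟩ ⟨q, hqm⟩ hp hq (by simpa [Subtype.ext_iff] using hpq)
    have hmem : (u : V) ∈ C ∨ (v : V) ∈ C := by
      by_contra hcon
      push_neg at hcon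
      have huS : (u : V) ∈ S := (Set.mem_union _ _ _ |>.mp u.2).resolve_left hcon.1
      have hvS : (v : V) ∈ S := (Set.mem_union _ _ _ |>.mp v.2).resolve_left hcon.2
      exact hnadj (hclique _ huS _ hvS (by simpa [Subtype.ext_iff] using huv))
    cases hmem with
    | inl h => exact ⟨u, h, key u h hu⟩
    | inr h => exact ⟨v, h, key v h hv⟩
lemma sep_clique [DecidableEq V] {G : SimpleGraph V} (hG : IsChordalGraph G)
    {S A B : Set V} {x y : V}
    (hAS : ∀ z ∈ A, z ∉ S) (hBS : ∀ z ∈ B, z ∉ S)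
    (hAB : ∀ z, z ∈ A → z ∈ B → False)
    (hAclosed : ∀ u ∈ A, ∀ z, G.Adj u z → z ∉ S → z ∈ A)
    (hAconn : ∀ u ∈ A, ∀ v ∈ A, (GOn G A).Reachable u v)
    (hBconn : ∀ u ∈ B, ∀ v ∈ B, (GOn G B).Reachable u v)
    (hx : x ∈ S) (hy : y ∈ S) (hxy : x ≠ y)
    (hxA : ∃ p ∈ A, G.Adj x p) (hyA : ∃ p ∈ A, G.Adj y p)
    (hxB : ∃ p ∈ B, G.Adj x p) (hyB : ∃ p ∈ B, G.Adj y p) :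
    G.Adj x y := by
  by_contra hn
  set U : Set V := insert x (insert y A) with hU
  set W : Set V := insert x (insert y B) with hW
  have hreachU : (GOn G U).Reachable x y := by
    obtain ⟨p, hpA, hxp⟩ := hxA
    obtain ⟨q, hqA, hyq⟩ := hyA
    have h1 : (GOn G U).Adj x p := ⟨hxp, by simp [hU], by simp [hU, hpA]⟩
    have h2 : (GOn G U).Reachable p q :=
      (hAconn p hpA q hqA).mono (gOn_mono G fun z hz => by simp [hU, hz])
    have h3 : (GOn G U).Adj q y := ⟨hyq.symm, by simp [hU, hqA], by simp [hU]⟩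
    exact (h1.reachable.trans h2).trans h3.reachable
  have hreachW : (GOn G W).Reachable y x := by
    obtain ⟨p, hpB, hyp⟩ := hyB
    obtain ⟨q, hqB, hxq⟩ := hxB
    have h1 : (GOn G W).Adj y p := ⟨hyp, by simp [hW], by simp [hW, hpB]⟩
    have h2 : (GOn G W).Reachable p q :=
      (hBconn p hpB q hqB).mono (gOn_mono G fun z hz => by simp [hW, hz])
    have h3 : (GOn G W).Adj q x := ⟨hxq.symm, by simp [hW, hqB], by simp [hW]⟩
    exact (h1.reachable.trans h2).trans h3.reachable
  obtain ⟨P, hPpath, hPmin⟩ := exists_min_walk hreachU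
  obtain ⟨Q, hQpath, hQmin⟩ := exists_min_walk hreachW
  have hPedges : ∀ e ∈ P.edges, e ∈ G.edgeSet := fun e he =>
    (SimpleGraph.edgeSet_mono (gOn_le G U)) (P.edges_subset_edgeSet he)
  have hQedges : ∀ e ∈ Q.edges, e ∈ G.edgeSet := fun e he =>
    (SimpleGraph.edgeSet_mono (gOn_le G W)) (Q.edges_subset_edgeSet he)
  set Pg : G.Walk x y := P.transfer G hPedges with hPg
  set Qg : G.Walk y x := Q.transfer G hQedges with hQg
  set Cw : G.Walk x x := Pg.append Qg with hCw
  have hPsub : ∀ z ∈ P.support, z ∈ U := gOn_support_mem P (by simp [hU])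
  have hQsub : ∀ z ∈ Q.support, z ∈ W := gOn_support_mem Q (by simp [hW])
  have hxA' : x ∉ A := fun h => hAS x h hx
  have hyA' : y ∉ A := fun h => hAS y h hy
  have hxB' : x ∉ B := fun h => hBS x h hx
  have hyB' : y ∉ B := fun h => hBS y h hy
  have hcross : ∀ z, z ∈ P.support → z ∈ Q.support → z = x ∨ z = y := by
    intro z h1 h2
    have hz1 := hPsub z h1
    have hz2 := hQsub z h2
    rw [hU, Set.mem_insert_iff, Set.mem_insert_iff] at hz1
    rw [hW, Set.mem_insert_iff, Set.mem_insert_iff] at hz2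
    rcases hz1 with rfl | rfl | hz1
    · exact Or.inl rfl
    · exact Or.inr rfl
    · rcases hz2 with rfl | rfl | hz2
      · exact absurd hz1 hxA'
      · exact absurd hz1 hyA'
      · exact absurd (hAB z hz1 hz2) not_false
  have hadj_of : ∀ {T : Set V} (R : (GOn G T).Walk x y) {p q : V},
      s(p, q) ∈ R.edges → G.Adj p q := by
    intro T R p q he
    exact (R.edges_subset_edgeSet he).1
  have hPlen : 2 ≤ P.length := by
    by_contra hlt
    push_neg at hlt
    interval_cases h : P.length
    · exact hxy (Walk.eq_of_length_eq_zero h)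
    · have := edges_of_length_one P h
      have : s(x, y) ∈ P.edges := by rw [this]; simp
      exact hn (hadj_of P this)
  have hQlen : 2 ≤ Q.length := by
    by_contra hlt
    push_neg at hlt
    interval_cases h : Q.length
    · exact hxy (Walk.eq_of_length_eq_zero h).symm
    · have := edges_of_length_one Q h
      have : s(y, x) ∈ Q.edges := by rw [this]; simp
      exact hn ((Q.edges_subset_edgeSet this).1.symm)
  have hClen : Cw.length = P.length + Q.length := by
    rw [hCw, Walk.length_append, hPg, hQg, Walk.length_transfer, Walk.length_transfer]
  have hPnd : P.support.Nodup := hPpath.support_nodup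
  have hQnd : Q.support.Nodup := hQpath.support_nodup
  have hxPt : x ∉ P.support.tail := by
    have := P.support_eq_cons ▸ hPnd
    exact (List.nodup_cons.mp this).1
  have hyQt : y ∉ Q.support.tail := by
    have := Q.support_eq_cons ▸ hQnd
    exact (List.nodup_cons.mp this).1
  have hcyc : Cw.IsCycle := by
    rw [Walk.isCycle_def]
    refine ⟨?_, ?_, ?_⟩
    · rw [Walk.isTrail_def, hCw, Walk.edges_append, hPg, hQg, Walk.edges_transfer,
        Walk.edges_transfer]
      refine List.Nodup.append hPpath.isTrail.edges_nodup hQpath.isTrail.edges_nodup ?_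
      intro e heP heQ
      induction e with
      | h p q =>
        have hp1 : p ∈ P.support := P.fst_mem_support_of_mem_edges heP
        have hq1 : q ∈ P.support := P.snd_mem_support_of_mem_edges heP
        have hp2 : p ∈ Q.support := Q.fst_mem_support_of_mem_edges heQ
        have hq2 : q ∈ Q.support := Q.snd_mem_support_of_mem_edges heQ
        have hadj : G.Adj p q := hadj_of P heP
        rcases hcross p hp1 hp2 with rfl | rfl <;> rcases hcross q hq1 hq2 with rfl | rfl
        · exact hadj.ne rfl
        · exact hn hadj
        · exact hn hadj.symm
        · exact hadj.ne rfl
    · intro hnil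
      have : Cw.length = 0 := by rw [hnil]; rfl
      omega
    · rw [hCw, Walk.tail_support_append, hPg, hQg, Walk.support_transfer,
        Walk.support_transfer]
      refine List.Nodup.append hPnd.tail hQnd.tail ?_
      intro z hzP hzQ
      have h1 : z ∈ P.support := List.mem_of_mem_tail hzP
      have h2 : z ∈ Q.support := List.mem_of_mem_tail hzQ
      rcases hcross z h1 h2 with rfl | rfl
      · exact hxPt hzP
      · exact hyQt hzQ
  have hCedges : Cw.edges = P.edges ++ Q.edges := by
    rw [hCw, Walk.edges_append, hPg, hQg, Walk.edges_transfer, Walk.edges_transfer]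
  obtain ⟨u, w, huC, hwC, hadj, hne⟩ := hG x Cw hcyc (by omega)
  have hCsupp : ∀ z ∈ Cw.support, z ∈ P.support ∨ z ∈ Q.support := by
    intro z hz
    rw [hCw, Walk.mem_support_append_iff, hPg, hQg, Walk.support_transfer,
      Walk.support_transfer] at hz
    exact hz
  have hbothP : ∀ {p q : V}, p ∈ P.support → q ∈ P.support → G.Adj p q →
      s(p, q) ∈ Cw.edges := by
    intro p q hp hq h
    rw [hCedges]
    exact List.mem_append_left _
      (mem_edges_of_adj_of_min P hPmin hp hq ⟨h, hPsub p hp, hPsub q hq⟩)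
  have hbothQ : ∀ {p q : V}, p ∈ Q.support → q ∈ Q.support → G.Adj p q →
      s(p, q) ∈ Cw.edges := by
    intro p q hp hq h
    rw [hCedges]
    exact List.mem_append_right _
      (mem_edges_of_adj_of_min Q hQmin hp hq ⟨h, hQsub p hp, hQsub q hq⟩)
  -- final case analysis
  by_cases huP : u ∈ P.support <;> by_cases hwP : w ∈ P.support
  · exact hne (hbothP huP hwP hadj)
  · -- u ∈ P, w ∉ P, so w ∈ Q
    have hwQ : w ∈ Q.support := (hCsupp w hwC).resolve_left hwP
    by_cases huQ : u ∈ Q.support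
    · exact hne (hbothQ huQ hwQ hadj)
    · -- u ∈ A, w ∈ B
      have huA : u ∈ A := by
        have := hPsub u huP
        rw [hU, Set.mem_insert_iff, Set.mem_insert_iff] at this
        rcases this with rfl | rfl | h
        · exact absurd Q.end_mem_support huQ
        · exact absurd Q.start_mem_support huQ
        · exact h
      have hwB : w ∈ B := by
        have := hQsub w hwQ
        rw [hW, Set.mem_insert_iff, Set.mem_insert_iff] at this
        rcases this with rfl | rfl | h
        · exact absurd P.start_mem_support hwP
        · exact absurd P.end_mem_support hwP
        · exact h
      exact hAB w (hAclosed u huA w hadj (hBS w hwB)) hwB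
  · -- w ∈ P, u ∉ P
    have huQ : u ∈ Q.support := (hCsupp u huC).resolve_left huP
    by_cases hwQ : w ∈ Q.support
    · exact hne (hbothQ huQ hwQ hadj)
    · have hwA : w ∈ A := by
        have := hPsub w hwP
        rw [hU, Set.mem_insert_iff, Set.mem_insert_iff] at this
        rcases this with rfl | rfl | h
        · exact absurd Q.end_mem_support hwQ
        · exact absurd Q.start_mem_support hwQ
        · exact h
      have huB : u ∈ B := by
        have := hQsub u huQ
        rw [hW, Set.mem_insert_iff, Set.mem_insert_iff] at this
        rcases this with rfl | rfl | h
        · exact absurd P.start_mem_support huP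
        · exact absurd P.end_mem_support huP
        · exact h
      exact hAB u (hAclosed w hwA u hadj.symm (hBS u huB)) huB
  · have huQ : u ∈ Q.support := (hCsupp u huC).resolve_left huP
    have hwQ : w ∈ Q.support := (hCsupp w hwC).resolve_left hwP
    exact hne (hbothQ huQ hwQ hadj)
theorem dirac_aux : ∀ (n : ℕ) (V' : Type u_1) [Fintype V'] (G : SimpleGraph V'),
    Fintype.card V' ≤ n → IsChordalGraph G →
    (∀ a b : V', a ≠ b → G.Adj a b) ∨
      ∃ u v : V', u ≠ v ∧ ¬ G.Adj u v ∧ IsSimplicialVertex G u ∧ IsSimplicialVertex G v := by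
  intro n
  induction n with
  | zero =>
    intro V _ G hcard _
    left
    intro a b _
    exact ((Fintype.card_eq_zero_iff.mp (Nat.le_zero.mp hcard)).false a).elim
  | succ n ih =>
    intro V _ G hcard hG
    classical
    by_cases hcomp : ∀ a b : V, a ≠ b → G.Adj a b
    · exact Or.inl hcomp
    push_neg at hcomp
    obtain ⟨a, b, hab, hnadj⟩ := hcomp
    set Sep : Finset V → Prop :=
      fun S => a ∉ S ∧ b ∉ S ∧ ¬ (GOn G ((S : Set V))ᶜ).Reachable a b with hSepdef
    have hSep0 : Sep (Finset.univ \ {a, b}) := by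
      refine ⟨by simp, by simp, ?_⟩
      rintro ⟨w⟩
      cases w with
      | nil => exact hab rfl
      | @cons _ c _ h p =>
        have hc : c ∈ ((↑(Finset.univ \ {a, b} : Finset V) : Set V))ᶜ := h.2.2
        have hor : c = a ∨ c = b := by
          by_contra hcon
          push_neg at hcon
          exact hc (by simp [hcon.1, hcon.2])
        rcases hor with rfl | rfl
        · exact h.1.ne rfl
        · exact hnadj h.1
    obtain ⟨S, hS, hSmin⟩ : ∃ S, Sep S ∧ ∀ S', Sep S' → S.card ≤ S'.card := by
      obtain ⟨S, hSmem, hSmin⟩ := Finset.exists_min_image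
        (Finset.univ.filter (fun S : Finset V => Sep S)) Finset.card
        ⟨_, Finset.mem_filter.mpr ⟨Finset.mem_univ _, hSep0⟩⟩
      exact ⟨S, (Finset.mem_filter.mp hSmem).2,
        fun S' hS' => hSmin S' (Finset.mem_filter.mpr ⟨Finset.mem_univ _, hS'⟩)⟩
    set Ss : Set V := (S : Set V) with hSs
    set A : Set V := {z | (GOn G Ssᶜ).Reachable a z} with hA
    set B : Set V := {z | (GOn G Ssᶜ).Reachable b z} with hB
    have haA : a ∈ A := Reachable.refl _
    have hbB : b ∈ B := Reachable.refl _
    have haS : a ∈ Ssᶜ := hS.1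
    have hbS : b ∈ Ssᶜ := hS.2.1
    have hA_sub : ∀ z ∈ A, z ∉ Ss := fun z hz => gOn_reach_mem haS hz
    have hB_sub : ∀ z ∈ B, z ∉ Ss := fun z hz => gOn_reach_mem hbS hz
    have hAB : ∀ z, z ∈ A → z ∈ B → False := fun z h1 h2 => hS.2.2 (h1.trans h2.symm)
    have hAclosed : ∀ u ∈ A, ∀ z, G.Adj u z → z ∉ Ss → z ∈ A :=
      fun u hu z hadj hz => hu.trans (SimpleGraph.Adj.reachable ⟨hadj, hA_sub u hu, hz⟩)
    have hBclosed : ∀ u ∈ B, ∀ z, G.Adj u z → z ∉ Ss → z ∈ B :=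
      fun u hu z hadj hz => hu.trans (SimpleGraph.Adj.reachable ⟨hadj, hB_sub u hu, hz⟩)
    have hAconn : ∀ u ∈ A, ∀ v ∈ A, (GOn G A).Reachable u v := by
      intro u hu v hv
      obtain ⟨w1⟩ := hu
      obtain ⟨w2⟩ := hv
      have r1 : (GOn G A).Reachable a u :=
        gOn_reach_of_support w1 (fun z hz => reachable_of_mem_support w1 hz)
      have r2 : (GOn G A).Reachable a v :=
        gOn_reach_of_support w2 (fun z hz => reachable_of_mem_support w2 hz)
      exact r1.symm.trans r2
    have hBconn : ∀ u ∈ B, ∀ v ∈ B, (GOn G B).Reachable u v := by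
      intro u hu v hv
      obtain ⟨w1⟩ := hu
      obtain ⟨w2⟩ := hv
      have r1 : (GOn G B).Reachable b u :=
        gOn_reach_of_support w1 (fun z hz => reachable_of_mem_support w1 hz)
      have r2 : (GOn G B).Reachable b v :=
        gOn_reach_of_support w2 (fun z hz => reachable_of_mem_support w2 hz)
      exact r1.symm.trans r2
    have hnbrA : ∀ s ∈ Ss, ∃ p ∈ A, G.Adj s p := by
      intro s hsS
      by_contra hno
      push_neg at hno
      have hsS' : s ∈ S := hsS
      have hSep' : Sep (S.erase s) := by
        refine ⟨fun h => hS.1 (Finset.mem_of_mem_erase h),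
          fun h => hS.2.1 (Finset.mem_of_mem_erase h), ?_⟩
        rintro ⟨w⟩
        have hcoe : ((S.erase s : Finset V) : Set V) = Ss \ {s} := by
          rw [Finset.coe_erase]
        rw [hcoe] at w
        rcases walk_avoid w (fun h => haS h) with h1 | ⟨y, hy1, hy2⟩
        · exact hS.2.2 h1
        · exact hno y hy2 hy1.symm
      have h1 := hSmin _ hSep'
      have h2 : (S.erase s).card < S.card := Finset.card_erase_lt_of_mem hsS'
      omega
    have hnbrB : ∀ s ∈ Ss, ∃ p ∈ B, G.Adj s p := by
      intro s hsS
      by_contra hno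
      push_neg at hno
      have hsS' : s ∈ S := hsS
      have hSep' : Sep (S.erase s) := by
        refine ⟨fun h => hS.1 (Finset.mem_of_mem_erase h),
          fun h => hS.2.1 (Finset.mem_of_mem_erase h), ?_⟩
        rintro ⟨w⟩
        have hcoe : ((S.erase s : Finset V) : Set V) = Ss \ {s} := by
          rw [Finset.coe_erase]
        rw [hcoe] at w
        rcases walk_avoid w.reverse (fun h => hbS h) with h1 | ⟨y, hy1, hy2⟩
        · exact hS.2.2 h1.symm
        · exact hno y hy2 hy1.symm
      have h1 := hSmin _ hSep'
      have h2 : (S.erase s).card < S.card := Finset.card_erase_lt_of_mem hsS'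
      omega
    have hclique : ∀ p ∈ Ss, ∀ q ∈ Ss, p ≠ q → G.Adj p q := by
      intro p hp q hq hpq
      exact sep_clique hG hA_sub hB_sub hAB hAclosed hAconn hBconn hp hq hpq
        (hnbrA p hp) (hnbrA q hq) (hnbrB p hp) (hnbrB q hq)
    have hAclosure : ∀ v ∈ A, ∀ z, G.Adj v z → z ∈ A ∪ Ss := by
      intro v hv z hadj
      by_cases hz : z ∈ Ss
      · exact Or.inr hz
      · exact Or.inl (hAclosed v hv z hadj hz)
    have hBclosure : ∀ v ∈ B, ∀ z, G.Adj v z → z ∈ B ∪ Ss := by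
      intro v hv z hadj
      by_cases hz : z ∈ Ss
      · exact Or.inr hz
      · exact Or.inl (hBclosed v hv z hadj hz)
    have hbnot : b ∉ A ∪ Ss := by
      rintro (h | h)
      · exact hS.2.2 h
      · exact hS.2.1 h
    have hanot : a ∉ B ∪ Ss := by
      rintro (h | h)
      · exact hS.2.2 h.symm
      · exact hS.1 h
    have hcardA : Fintype.card ↥(A ∪ Ss) ≤ n := by
      have h1 : Fintype.card ↥(A ∪ Ss) < Fintype.card V := by
        apply Fintype.card_lt_of_injective_of_notMem (Subtype.val : ↥(A ∪ Ss) → V)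
          Subtype.val_injective (b := b)
        rintro ⟨⟨z, hz⟩, rfl⟩
        exact hbnot hz
      omega
    have hcardB : Fintype.card ↥(B ∪ Ss) ≤ n := by
      have h1 : Fintype.card ↥(B ∪ Ss) < Fintype.card V := by
        apply Fintype.card_lt_of_injective_of_notMem (Subtype.val : ↥(B ∪ Ss) → V)
          Subtype.val_injective (b := a)
        rintro ⟨⟨z, hz⟩, rfl⟩
        exact hanot hz
      omega
    have resA := ih ↥(A ∪ Ss) (G.induce (A ∪ Ss)) hcardA (chordal_induce hG _)
    have resB := ih ↥(B ∪ Ss) (G.induce (B ∪ Ss)) hcardB (chordal_induce hG _)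
    obtain ⟨u, huA, husimp⟩ := extract_simplicial haA hAclosure hclique resA
    obtain ⟨v, hvB, hvsimp⟩ := extract_simplicial hbB hBclosure hclique resB
    right
    refine ⟨u, v, ?_, ?_, husimp, hvsimp⟩
    · intro h
      exact hAB u huA (h ▸ hvB)
    · intro hadj
      exact hAB v (hAclosed u huA v hadj (hB_sub v hvB)) hvB

/-- Dirac's lemma: every finite chordal graph is complete or has two non-adjacent
simplicial vertices. -/
theorem stmt3 [Fintype V] (G : SimpleGraph V) (hG : IsChordalGraph G) :
    (∀ a b : V, a ≠ b → G.Adj a b) ∨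
      ∃ u v : V, u ≠ v ∧ ¬ G.Adj u v ∧ IsSimplicialVertex G u ∧ IsSimplicialVertex G v := by
  exact dirac_aux (Fintype.card V) V G le_rfl hG
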